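/- arXiv:2312.13132 — 4 statements merged into one kernel-verified Lean document; each statement's English description precedes it below -/
import Mathlib

section
/- In a finite two-player reachability game on a directed arena G = (V, V_R, V_S, E, F) where every vertex has at least one outgoing edge, exactly one of the players (the reachability player or the safety player) has a memoryless winning strategy from any given initial vertex. -/
section ReachGame

variable {V : Type} (VR : Set V) (E : V → V → Prop) (F : Set V)

/-- Iterated attractor sets. -/
def attrIter : ℕ → Set V
  | 0 => F
  | n+1 => attrIter n ∪ {v | (v ∈ VR ∧ ∃ u, E v u ∧ u ∈ attrIter n) ∨
      (v ∉ VR ∧ ∀ u, E v u → u ∈ attrIter n)}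

/-- The attractor of `F` for the reachability player, as an inductive predicate. -/
inductive Attr : V → Prop
  | base {v} : v ∈ F → Attr v
  | stepR {v u} : v ∈ VR → E v u → Attr u → Attr v
  | stepS {v} : v ∉ VR → (∀ u, E v u → Attr u) → Attr v

variable {VR E F}

lemma attrIter_succ_subset (n : ℕ) : attrIter VR E F n ⊆ attrIter VR E F (n+1) :=
  Set.subset_union_left

lemma attrIter_mono {m n : ℕ} (h : m ≤ n) : attrIter VR E F m ⊆ attrIter VR E F n := by
  induction n, h using Nat.le_induction with
  | base => exact subset_rfl
  | succ n hn ih => exact ih.trans (attrIter_succ_subset n)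

lemma attr_to_iter [Fintype V] {v : V} (h : Attr VR E F v) :
    ∃ n, v ∈ attrIter VR E F n := by
  classical
  induction h with
  | base hv => exact ⟨0, hv⟩
  | stepR hVR hE _ ih =>
    obtain ⟨n, hn⟩ := ih
    exact ⟨n+1, Set.mem_union_right _ (Or.inl ⟨hVR, _, hE, hn⟩)⟩
  | stepS hVR hall ih =>
    set g : V → ℕ := fun u => if h : ∃ n, u ∈ attrIter VR E F n then Nat.find h else 0
      with hg
    refine ⟨(Finset.univ.sup g) + 1, Set.mem_union_right _ (Or.inr ⟨hVR, fun u hu => ?_⟩)⟩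
    have hu' := ih u hu
    have hmem : u ∈ attrIter VR E F (g u) := by
      rw [hg]; simp only [dif_pos hu']; exact Nat.find_spec hu'
    exact attrIter_mono (Finset.le_sup (Finset.mem_univ u)) hmem

end ReachGame

/-- In a finite two-player reachability game on a directed arena
where every vertex has an outgoing edge, exactly one of the two players has a
memoryless winning strategy from any given initial vertex. -/
theorem stmt_0 (V : Type) [Fintype V] (VR : Set V) (E : V → V → Prop) (F : Set V)
    (htotal : ∀ v, ∃ u, E v u) (v0 : V) :
    Xor'
      (∃ σ : V → V, (∀ v, E v (σ v)) ∧
        ∀ p : ℕ → V, p 0 = v0 → (∀ i, E (p i) (p (i + 1))) →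
          (∀ i, p i ∈ VR → p (i + 1) = σ (p i)) → ∃ i, p i ∈ F)
      (∃ τ : V → V, (∀ v, E v (τ v)) ∧
        ∀ p : ℕ → V, p 0 = v0 → (∀ i, E (p i) (p (i + 1))) →
          (∀ i, p i ∉ VR → p (i + 1) = τ (p i)) → ∀ i, p i ∉ F) := by
  classical
  set A := attrIter VR E F with hA
  -- exclusivity: not both players win
  have hexcl : ¬ ((∃ σ : V → V, (∀ v, E v (σ v)) ∧
        ∀ p : ℕ → V, p 0 = v0 → (∀ i, E (p i) (p (i + 1))) →
          (∀ i, p i ∈ VR → p (i + 1) = σ (p i)) → ∃ i, p i ∈ F) ∧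
      (∃ τ : V → V, (∀ v, E v (τ v)) ∧
        ∀ p : ℕ → V, p 0 = v0 → (∀ i, E (p i) (p (i + 1))) →
          (∀ i, p i ∉ VR → p (i + 1) = τ (p i)) → ∀ i, p i ∉ F)) := by
    rintro ⟨⟨σ, hσE, hσW⟩, ⟨τ, hτE, hτW⟩⟩
    set p : ℕ → V := fun i => Nat.rec v0 (fun _ prev => if prev ∈ VR then σ prev else τ prev) i
      with hp
    have hp0 : p 0 = v0 := rfl
    have hpsucc : ∀ i, p (i+1) = if p i ∈ VR then σ (p i) else τ (p i) := fun i => rfl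
    have hpE : ∀ i, E (p i) (p (i+1)) := by
      intro i; rw [hpsucc i]
      by_cases h : p i ∈ VR
      · rw [if_pos h]; exact hσE _
      · rw [if_neg h]; exact hτE _
    have hpσ : ∀ i, p i ∈ VR → p (i+1) = σ (p i) := fun i h => by rw [hpsucc i, if_pos h]
    have hpτ : ∀ i, p i ∉ VR → p (i+1) = τ (p i) := fun i h => by rw [hpsucc i, if_neg h]
    obtain ⟨i, hi⟩ := hσW p hp0 hpE hpσ
    exact hτW p hp0 hpE hpτ i hi
  by_cases hwin : ∃ n, v0 ∈ A n
  · -- reachability player wins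
    refine Or.inl ⟨?_, fun hτ => hexcl ⟨?_, hτ⟩⟩ <;>
    · -- build σ
      have hex : ∀ v, v ∈ VR → v ∉ F → (h : ∃ n, v ∈ A n) →
          ∃ u, E v u ∧ u ∈ A (Nat.find h - 1) := by
        intro v hVR hF h
        obtain ⟨m, hm⟩ := Nat.exists_eq_succ_of_ne_zero
          (show Nat.find h ≠ 0 from fun h0 => hF (by
            have := Nat.find_spec h; rw [h0] at this; exact this))
        have hmem : v ∈ A (m+1) := by
          have := Nat.find_spec h; rw [hm] at this; exact this
        have hnot : v ∉ A m := Nat.find_min h (by omega)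
        rw [hA] at hmem
        rcases hmem with h1 | h2
        · exact absurd h1 hnot
        · rcases h2 with ⟨_, u, hEu, hu⟩ | ⟨hn, _⟩
          · exact ⟨u, hEu, by rw [hm]; simpa using hu⟩
          · exact absurd hVR hn
      set σ : V → V := fun v =>
        if h : v ∈ VR ∧ v ∉ F ∧ ∃ n, v ∈ A n then (hex v h.1 h.2.1 h.2.2).choose
        else (htotal v).choose with hσ
      have hσE : ∀ v, E v (σ v) := by
        intro v; rw [hσ]; dsimp only
        split
        · next h => exact (hex v h.1 h.2.1 h.2.2).choose_spec.1
        · exact (htotal v).choose_spec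
      refine ⟨σ, hσE, ?_⟩
      intro p hp0 hpE hpσ
      have claim : ∀ n i, p i ∈ A n → ∃ j, p j ∈ F := by
        intro n
        induction n with
        | zero => exact fun i hi => ⟨i, hi⟩
        | succ n ih =>
          intro i hi
          by_cases hF : p i ∈ F
          · exact ⟨i, hF⟩
          by_cases hAn : p i ∈ A n
          · exact ih i hAn
          have hi0 : p i ∈ A (n+1) := hi
          rw [hA] at hi
          rcases hi with h1 | h2
          · exact absurd h1 hAn
          rcases h2 with ⟨hVR, _⟩ | ⟨hnVR, hall⟩
          · -- reachability vertex: follow σ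
            have hcond : p i ∈ VR ∧ p i ∉ F ∧ ∃ m, p i ∈ A m := ⟨hVR, hF, n+1, hi0⟩
            have hstep : p (i+1) = σ (p i) := hpσ i hVR
            have hσval : σ (p i) = (hex (p i) hcond.1 hcond.2.1 hcond.2.2).choose := by
              rw [hσ]; exact dif_pos hcond
            have hin : σ (p i) ∈ A (Nat.find hcond.2.2 - 1) := by
              rw [hσval]; exact (hex (p i) hcond.1 hcond.2.1 hcond.2.2).choose_spec.2
            have hle : Nat.find hcond.2.2 - 1 ≤ n := by
              have : Nat.find hcond.2.2 ≤ n + 1 := Nat.find_le hi0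
              omega
            have hfin : p (i+1) ∈ A n := by
              rw [hstep]; exact attrIter_mono hle hin
            exact ih (i+1) hfin
          · -- safety vertex: all successors descend
            exact ih (i+1) (hall _ (hpE i))
      obtain ⟨n, hn⟩ := hwin
      exact claim n 0 (by rw [hp0]; exact hn)
  · -- safety player wins
    have hattr : ¬ Attr VR E F v0 := fun h => hwin (attr_to_iter h)
    refine Or.inr ⟨?_, fun hσ => hexcl ⟨hσ, ?_⟩⟩ <;>
    · have hex2 : ∀ v, v ∉ VR → ¬ Attr VR E F v → ∃ u, E v u ∧ ¬ Attr VR E F u := by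
        intro v h1 h2
        by_contra hc
        push_neg at hc
        exact h2 (Attr.stepS h1 hc)
      set τ : V → V := fun v =>
        if h : v ∉ VR ∧ ¬ Attr VR E F v then (hex2 v h.1 h.2).choose
        else (htotal v).choose with hτ
      have hτE : ∀ v, E v (τ v) := by
        intro v; rw [hτ]; dsimp only
        split
        · next h => exact (hex2 v h.1 h.2).choose_spec.1
        · exact (htotal v).choose_spec
      refine ⟨τ, hτE, ?_⟩
      intro p hp0 hpE hpτ
      have hinv : ∀ i, ¬ Attr VR E F (p i) := by
        intro i
        induction i with
        | zero => rw [hp0]; exact hattr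
        | succ i ih =>
          by_cases hVR : p i ∈ VR
          · intro hc
            exact ih (Attr.stepR hVR (hpE i) hc)
          · have hstep : p (i+1) = τ (p i) := hpτ i hVR
            have : τ (p i) = (hex2 (p i) hVR ih).choose := by
              rw [hτ]; exact dif_pos ⟨hVR, ih⟩
            rw [hstep, this]
            exact (hex2 (p i) hVR ih).choose_spec.2
      exact fun i hF => hinv i (Attr.base hF)
end

section
/- The attractor of a target set F in a finite reachability game, defined as the least fixed point of the one-step attractor operator, equals the set of vertices from which the reachability player has a winning strategy. -/
/-- One-step attractor operator: keep A, add reachability-player vertices with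
some successor in A, and safety-player vertices all of whose successors are in A. -/
def attrStep {V : Type} (VR : Set V) (E : V → V → Prop) (A : Set V) : Set V :=
  A ∪ {v | v ∈ VR ∧ ∃ u, E v u ∧ u ∈ A} ∪ {v | v ∉ VR ∧ ∀ u, E v u → u ∈ A}

open Classical in
private noncomputable def sigWin {V : Type} (E : V → V → Prop) (A : ℕ → Set V)
    (htotal : ∀ v, ∃ u, E v u) (v : V) : V :=
  if h : ∃ u, E v u ∧ ∃ n, u ∈ A n ∧ v ∉ A n then h.choose else (htotal v).choose

open Classical in
private lemma sigWin_edge {V : Type} (E : V → V → Prop) (A : ℕ → Set V)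
    (htotal : ∀ v, ∃ u, E v u) (v : V) : E v (sigWin E A htotal v) := by
  unfold sigWin
  split
  · next h => exact h.choose_spec.1
  · exact (htotal v).choose_spec

open Classical in
private lemma sigWin_dec {V : Type} (E : V → V → Prop) (A : ℕ → Set V)
    (htotal : ∀ v, ∃ u, E v u) (v : V)
    (h : ∃ u, E v u ∧ ∃ n, u ∈ A n ∧ v ∉ A n) :
    ∃ n, sigWin E A htotal v ∈ A n ∧ v ∉ A n := by
  unfold sigWin
  rw [dif_pos h]
  exact h.choose_spec.2

open Classical in
private noncomputable def escStep {V : Type} (VR : Set V) (E : V → V → Prop)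
    (Attr : Set V) (σ : V → V) (htotal : ∀ v, ∃ u, E v u) (w : V) : V :=
  if w ∈ VR then σ w else
    if h : ∃ u, E w u ∧ u ∉ Attr then h.choose else (htotal w).choose

/-- The attractor of F (least fixed point of the one-step attractor
operator, obtained as the union of its iterates starting from F) equals the set
of vertices from which the reachability player has a (memoryless) winning strategy. -/
theorem stmt_2 (V : Type) [Fintype V] (VR : Set V) (E : V → V → Prop) (F : Set V)
    (htotal : ∀ v, ∃ u, E v u) :
    (⋃ i : ℕ, (attrStep VR E)^[i] F) =
      {v | ∃ σ : V → V, (∀ u, E u (σ u)) ∧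
        ∀ p : ℕ → V, p 0 = v → (∀ i, E (p i) (p (i + 1))) →
          (∀ i, p i ∈ VR → p (i + 1) = σ (p i)) → ∃ i, p i ∈ F} := by
  classical
  set A : ℕ → Set V := fun i => (attrStep VR E)^[i] F with hA
  have hAsucc : ∀ n, A (n + 1) = attrStep VR E (A n) := fun n =>
    Function.iterate_succ_apply' _ _ _
  have hA0 : A 0 = F := rfl
  have hsub : ∀ X, X ⊆ attrStep VR E X := fun X v hv => Or.inl (Or.inl hv)
  have hmono : Monotone A := monotone_nat_of_le_succ fun n => by
    rw [hAsucc]; exact hsub _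
  set Attr : Set V := ⋃ i : ℕ, A i with hAttr
  -- the attractor is closed under attrStep (uses finiteness of V)
  have hclosed : attrStep VR E Attr ⊆ Attr := by
    intro v hv
    rcases hv with (hv | hv) | hv
    · exact hv
    · obtain ⟨hVR, u, hE, hu⟩ := hv
      obtain ⟨s, ⟨i, rfl⟩, hui⟩ := hu
      exact Set.mem_iUnion.2 ⟨i + 1, by
        rw [hAsucc]; exact Or.inl (Or.inr ⟨hVR, u, hE, hui⟩)⟩
    · obtain ⟨hVR, hall⟩ := hv
      set g : V → ℕ := fun u => if h : ∃ n, u ∈ A n then Nat.find h else 0 with hg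
      set N : ℕ := Finset.univ.sup g with hN
      have hallN : ∀ u, E v u → u ∈ A N := by
        intro u hE
        have hu : ∃ n, u ∈ A n := Set.mem_iUnion.1 (hall u hE)
        have : u ∈ A (g u) := by simp only [hg, dif_pos hu]; exact Nat.find_spec hu
        exact hmono (Finset.le_sup (Finset.mem_univ u)) this
      exact Set.mem_iUnion.2 ⟨N + 1, by
        rw [hAsucc]; exact Or.inr ⟨hVR, hallN⟩⟩
  ext v
  simp only [Set.mem_setOf_eq]
  constructor
  · -- attractor ⊆ winning
    intro hv
    set σ : V → V := sigWin E A htotal with hσ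
    refine ⟨σ, fun u => sigWin_edge E A htotal u, ?_⟩
    have main : ∀ n, ∀ p : ℕ → V, (∀ i, E (p i) (p (i + 1))) →
        (∀ i, p i ∈ VR → p (i + 1) = σ (p i)) → p 0 ∈ A n → ∃ i, p i ∈ F := by
      intro n
      induction n using Nat.strong_induction_on with
      | _ n IH =>
        intro p pe pc h0
        have hex : ∃ m, p 0 ∈ A m := ⟨n, h0⟩
        obtain ⟨m, hmem, hmin⟩ : ∃ m, p 0 ∈ A m ∧ ∀ j < m, p 0 ∉ A j :=
          ⟨Nat.find hex, Nat.find_spec hex, fun j hj => Nat.find_min hex hj⟩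
        have hmn : m ≤ n := le_of_not_gt fun h => hmin n h h0
        match m, hmem, hmin, hmn with
        | 0, hmem, hmin, hmn => exact ⟨0, hA0 ▸ hmem⟩
        | k + 1, hmem, hmin, hmn =>
          have hmemk : p 0 ∈ A (k + 1) := hmem
          rw [hAsucc] at hmem
          rcases hmem with (hc | hc) | hc
          · exact absurd hc (hmin k (Nat.lt_succ_self k))
          · obtain ⟨hVR, u, hE, hu⟩ := hc
            have hcond : ∃ u, E (p 0) u ∧ ∃ n', u ∈ A n' ∧ p 0 ∉ A n' :=
              ⟨u, hE, k, hu, hmin k (Nat.lt_succ_self k)⟩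
            obtain ⟨n', hσA, hnotA⟩ := sigWin_dec E A htotal (p 0) hcond
            have hn'lt : n' < k + 1 := by
              by_contra h
              exact hnotA (hmono (le_of_not_gt h) hmemk)
            have hp1 : p 1 ∈ A n' := by
              rw [pc 0 hVR]; exact hσA
            obtain ⟨i, hi⟩ := IH n' (lt_of_lt_of_le hn'lt hmn) (fun i => p (i + 1))
              (fun i => pe (i + 1)) (fun i hi => pc (i + 1) hi) hp1
            exact ⟨i + 1, hi⟩
          · obtain ⟨hVR, hall⟩ := hc
            have hp1 : p 1 ∈ A k := hall (p 1) (pe 0)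
            obtain ⟨i, hi⟩ := IH k (lt_of_lt_of_le (Nat.lt_succ_self k) hmn)
              (fun i => p (i + 1)) (fun i => pe (i + 1)) (fun i hi => pc (i + 1) hi) hp1
            exact ⟨i + 1, hi⟩
    intro p hp0 pe pc
    obtain ⟨i, hi⟩ := Set.mem_iUnion.1 hv
    exact main i p pe pc (hp0 ▸ hi)
  · -- winning ⊆ attractor
    rintro ⟨σ, hσE, hwin⟩
    by_contra hv
    set p : ℕ → V := fun i => (escStep VR E Attr σ htotal)^[i] v with hp
    have hstep : ∀ i, p (i + 1) = escStep VR E Attr σ htotal (p i) := fun i =>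
      Function.iterate_succ_apply' _ _ _
    have hinv : ∀ i, p i ∉ Attr := by
      intro i
      induction i with
      | zero => exact hv
      | succ i ih =>
        rw [hstep i]
        unfold escStep
        by_cases hVR : p i ∈ VR
        · rw [if_pos hVR]
          intro hmem
          exact ih (hclosed (Or.inl (Or.inr ⟨hVR, σ (p i), hσE (p i), hmem⟩)))
        · rw [if_neg hVR]
          have hcond : ∃ u, E (p i) u ∧ u ∉ Attr := by
            by_contra h
            push_neg at h
            exact ih (hclosed (Or.inr ⟨hVR, h⟩))
          rw [dif_pos hcond]
          exact hcond.choose_spec.2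
    have hedge : ∀ i, E (p i) (p (i + 1)) := by
      intro i
      rw [hstep i]
      unfold escStep
      by_cases hVR : p i ∈ VR
      · rw [if_pos hVR]; exact hσE (p i)
      · rw [if_neg hVR]
        have hcond : ∃ u, E (p i) u ∧ u ∉ Attr := by
          by_contra h
          push_neg at h
          exact hinv i (hclosed (Or.inr ⟨hVR, h⟩))
        rw [dif_pos hcond]
        exact hcond.choose_spec.1
    have hcons : ∀ i, p i ∈ VR → p (i + 1) = σ (p i) := by
      intro i hVR
      rw [hstep i]
      unfold escStep
      rw [if_pos hVR]
    obtain ⟨i, hi⟩ := hwin p rfl hedge hcons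
    exact hinv i (Set.mem_iUnion.2 ⟨0, hA0 ▸ hi⟩)
end

section
/- The translation of a classic sabotage game on an undirected graph Ḡ = (V̄, Ē) into a generalized sabotage game G — with one subdivision vertex v_e per edge e, a hub vertex z from which the saboteur can reach and return from every subdivision vertex, unlimited saboteur budget, and the same final set — preserves the winner: the traveler wins the generalized sabotage game G if and only if she wins the classic sabotage game on Ḡ. -/
/-- The traveler wins the classic sabotage game on an undirected graph given by
the edge set `Es` (a finset of unordered pairs), trying to reach `F`: she either
is at a final vertex, or she can move along a remaining edge onto a final vertex,
or she can move along a remaining edge so that, whichever single edge the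
saboteur then deletes, she keeps winning. -/
inductive TravWinsClassic {V : Type} [DecidableEq V] (F : Set V) :
    Finset (Sym2 V) → V → Prop
  | atFinal {Es : Finset (Sym2 V)} {v : V} : v ∈ F → TravWinsClassic F Es v
  | stepWin {Es : Finset (Sym2 V)} {v u : V} :
      s(v, u) ∈ Es → u ∈ F → TravWinsClassic F Es v
  | step {Es : Finset (Sym2 V)} {v u : V} :
      s(v, u) ∈ Es →
      (∀ e ∈ Es, TravWinsClassic F (Es.erase e) u) →
      TravWinsClassic F Es v

/-- The traveler wins the generalized sabotage game with perfect information and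
unlimited saboteur budget from configuration (t, b, T): she is at a final vertex,
or she moves along her edges to an unmarked final vertex, or she moves to an
unmarked vertex so that after any legal saboteur move-and-mark she keeps winning. -/
inductive TravWinsGen {V : Type} (ET EB : V → V → Prop) (F : Set V) :
    V → V → Set V → Prop
  | atFinal {t b : V} {T : Set V} : t ∈ F → TravWinsGen ET EB F t b T
  | stepWin {t b : V} {T : Set V} (t' : V) :
      ET t t' → t' ∉ T → t' ∈ F → TravWinsGen ET EB F t b T
  | step {t b : V} {T : Set V} (t' : V) :
      ET t t' → t' ∉ T →
      (∀ (b' : V) (T' : Set V), EB b b' → T ⊆ T' → T' ⊆ T ∪ {b, b'} →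
        t' ∉ T' → TravWinsGen ET EB F t' b' T') →
      TravWinsGen ET EB F t b T

/-- Traveler edges of the subdivision-plus-hub construction: `u → v_e` and
`v_e → v` (in both directions) for every edge `e ∈ Es` with endpoint `u` resp. `v`. -/
def hubET {V : Type} [DecidableEq V] (Es : Finset (Sym2 V)) :
    V ⊕ Sym2 V ⊕ Unit → V ⊕ Sym2 V ⊕ Unit → Prop
  | Sum.inl u, Sum.inr (Sum.inl e) => e ∈ Es ∧ u ∈ e
  | Sum.inr (Sum.inl e), Sum.inl u => e ∈ Es ∧ u ∈ e
  | _, _ => False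

/-- Saboteur edges of the subdivision-plus-hub construction: `z → v_e` and
`v_e → z` for every `e ∈ Es`, where `z` is the hub vertex. -/
def hubEB {V : Type} [DecidableEq V] (Es : Finset (Sym2 V)) :
    V ⊕ Sym2 V ⊕ Unit → V ⊕ Sym2 V ⊕ Unit → Prop
  | Sum.inr (Sum.inr _), Sum.inr (Sum.inl e) => e ∈ Es
  | Sum.inr (Sum.inl e), Sum.inr (Sum.inr _) => e ∈ Es
  | _, _ => False

section Aux
set_option linter.unusedSectionVars false

variable {V : Type} [DecidableEq V]

/-- The hub vertex. -/
def hubZ : V ⊕ Sym2 V ⊕ Unit := Sum.inr (Sum.inr ())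

open Classical in
/-- Remaining (unmarked) edges. -/
noncomputable def remEdges (Es : Finset (Sym2 V)) (T : Set (V ⊕ Sym2 V ⊕ Unit)) :
    Finset (Sym2 V) :=
  Es.filter (fun e => Sum.inr (Sum.inl e) ∉ T)

lemma mem_remEdges {Es : Finset (Sym2 V)} {T : Set (V ⊕ Sym2 V ⊕ Unit)} {e : Sym2 V} :
    e ∈ remEdges Es T ↔ e ∈ Es ∧ Sum.inr (Sum.inl e) ∉ T := by
  simp [remEdges]

lemma remEdges_empty (Es : Finset (Sym2 V)) : remEdges Es (∅ : Set _) = Es := by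
  ext e; simp [remEdges]

lemma classic_mono {F : Set V} {R R' : Finset (Sym2 V)} {v : V}
    (h : TravWinsClassic F R v) (hs : R ⊆ R') : TravWinsClassic F R' v := by
  induction h generalizing R' with
  | atFinal h => exact .atFinal h
  | stepWin he hu => exact .stepWin (hs he) hu
  | @step R v u he h ih =>
      refine .step (hs he) (fun e heR' => ?_)
      by_cases heR : e ∈ R
      · exact ih e heR (Finset.erase_subset_erase _ hs)
      · refine ih _ he (fun x hx => Finset.mem_erase.2 ?_)
        have hxR := Finset.mem_of_mem_erase hx
        exact ⟨fun hxe => heR (hxe ▸ hxR), hs hxR⟩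

end Aux

section Aux2
set_option linter.unusedSectionVars false
variable {V : Type} [DecidableEq V]

lemma toGen {Es : Finset (Sym2 V)} {F : Set V} :
    ∀ {Es' : Finset (Sym2 V)} {v : V}, TravWinsClassic F Es' v → Es' ⊆ Es →
    ∀ T : Set (V ⊕ Sym2 V ⊕ Unit),
      (∀ e ∈ Es', Sum.inr (Sum.inl e) ∉ T) → (∀ u : V, Sum.inl u ∉ T) →
      TravWinsGen (hubET Es) (hubEB Es) (Sum.inl '' F) (Sum.inl v) hubZ T := by
  intro Es' v h
  induction h with
  | @atFinal Es' v hv =>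
      intro _ T _ _
      exact .atFinal ⟨v, hv, rfl⟩
  | @stepWin Es' v u he hu =>
      intro hsub T hT hTl
      refine .step (Sum.inr (Sum.inl s(v, u)))
        (show s(v,u) ∈ Es ∧ v ∈ s(v,u) from ⟨hsub he, Sym2.mem_mk_left v u⟩)
        (hT _ he) ?_
      intro b' T' hEB hTT' hT'sub ht'
      rcases b' with w | e' | u'
      · exact hEB.elim
      · refine .stepWin (Sum.inl u)
          (show s(v,u) ∈ Es ∧ u ∈ s(v,u) from ⟨hsub he, Sym2.mem_mk_right v u⟩)
          ?_ ⟨u, hu, rfl⟩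
        intro hmem
        rcases hT'sub hmem with h | h
        · exact hTl u h
        · simp [hubZ] at h
      · exact hEB.elim
  | @step Es' v u he hstep ih =>
      intro hsub T hT hTl
      refine .step (Sum.inr (Sum.inl s(v, u)))
        (show s(v,u) ∈ Es ∧ v ∈ s(v,u) from ⟨hsub he, Sym2.mem_mk_left v u⟩)
        (hT _ he) ?_
      intro b' T' hEB hTT' hT'sub ht'
      rcases b' with w | e' | u'
      · exact hEB.elim
      swap
      · exact hEB.elim
      refine .step (Sum.inl u)
        (show s(v,u) ∈ Es ∧ u ∈ s(v,u) from ⟨hsub he, Sym2.mem_mk_right v u⟩)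
        ?_ ?_
      · intro hmem
        rcases hT'sub hmem with h | h
        · exact hTl u h
        · simp [hubZ] at h
      · intro b'' T'' hEB2 hT'T'' hT''sub ht''
        rcases b'' with w2 | e2 | u2
        · exact hEB2.elim
        · exact hEB2.elim
        -- key: membership chase for T''
        have hchase : ∀ x : V ⊕ Sym2 V ⊕ Unit, x ∈ T'' →
            x ∈ T ∨ x = hubZ ∨ x = Sum.inr (Sum.inl e') ∨ x = Sum.inr (Sum.inr u2) := by
          intro x hx
          rcases hT''sub hx with hx' | hx'
          · rcases hT'sub hx' with hx'' | hx''
            · exact Or.inl hx''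
            · rcases hx'' with hx'' | hx''
              · exact Or.inr (Or.inl hx'')
              · exact Or.inr (Or.inr (Or.inl hx''))
          · rcases hx' with hx' | hx'
            · exact Or.inr (Or.inr (Or.inl hx'))
            · exact Or.inr (Or.inr (Or.inr hx'))
        have hTl'' : ∀ w : V, Sum.inl w ∉ T'' := by
          intro w hw
          rcases hchase _ hw with h | h | h | h
          · exact hTl w h
          · simp [hubZ] at h
          · simp at h
          · simp at h
        by_cases he' : e' ∈ Es'
        · refine ih e' he' (fun x hx => hsub (Finset.mem_of_mem_erase hx)) T'' ?_ hTl''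
          intro x hx hmem
          rcases hchase _ hmem with h | h | h | h
          · exact hT x (Finset.mem_of_mem_erase hx) h
          · simp [hubZ] at h
          · exact (Finset.mem_erase.1 hx).1 (by simpa using h)
          · simp at h
        · refine ih s(v,u) he (fun x hx => hsub (Finset.mem_of_mem_erase hx)) T'' ?_ hTl''
          intro x hx hmem
          have hxEs' := Finset.mem_of_mem_erase hx
          rcases hchase _ hmem with h | h | h | h
          · exact hT x hxEs' h
          · simp [hubZ] at h
          · have : x = e' := by simpa using h
            exact he' (this ▸ hxEs')
          · simp at h

end Aux2

section Aux3
set_option linter.unusedSectionVars false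
variable {V : Type} [DecidableEq V]

lemma remEdges_erase (Es : Finset (Sym2 V)) (T : Set (V ⊕ Sym2 V ⊕ Unit)) (e'' : Sym2 V) :
    remEdges Es ((T ∪ {hubZ}) ∪ {Sum.inr (Sum.inl e''), hubZ}) = (remEdges Es T).erase e'' := by
  classical
  ext x
  simp only [mem_remEdges, Finset.mem_erase, Set.mem_union, Set.mem_insert_iff,
    Set.mem_singleton_iff, hubZ, not_or]
  constructor
  · rintro ⟨hx, ⟨hT, hz⟩, hne, _⟩
    exact ⟨fun hxe => hne (by rw [hxe]), hx, hT⟩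
  · rintro ⟨hne, hx, hT⟩
    refine ⟨hx, ⟨hT, by simp⟩, by simpa using hne, by simp⟩

lemma toClassic {Es : Finset (Sym2 V)} {F : Set V} {t b : V ⊕ Sym2 V ⊕ Unit}
    {T : Set (V ⊕ Sym2 V ⊕ Unit)}
    (h : TravWinsGen (hubET Es) (hubEB Es) (Sum.inl '' F) t b T) :
    (∀ v : V, t = Sum.inl v → b = hubZ → TravWinsClassic F (remEdges Es T) v) ∧
    (∀ (e e' : Sym2 V), t = Sum.inr (Sum.inl e) → b = Sum.inr (Sum.inl e') → e' ∈ Es →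
      ∃ w, w ∈ e ∧ TravWinsClassic F (remEdges Es (T ∪ {b, hubZ})) w) := by
  induction h with
  | @atFinal t b T ht =>
      constructor
      · intro v hv _
        subst hv
        obtain ⟨w, hwF, hw⟩ := ht
        cases hw
        exact .atFinal hwF
      · intro e e' hte _ _
        subst hte
        obtain ⟨w, _, hw⟩ := ht
        exact absurd hw (by simp)
  | @stepWin t b T t' hET ht'T ht'F =>
      constructor
      · intro v hv _
        subst hv
        obtain ⟨w, hwF, hw⟩ := ht'F
        subst hw
        exact hET.elim
      · intro e e' hte _ _
        subst hte
        obtain ⟨w, hwF, hw⟩ := ht'F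
        subst hw
        exact ⟨w, hET.2, .atFinal hwF⟩
  | @step t b T t' hET ht'T hrec ih =>
      constructor
      · -- traveler at a base vertex, saboteur at the hub
        intro v hv hb
        subst hv; subst hb
        rcases t' with w | e | u0
        · exact hET.elim
        swap
        · exact hET.elim
        obtain ⟨heEs, hve⟩ := hET
        obtain ⟨u, rfl⟩ := Sym2.mem_iff_exists.1 hve
        by_cases hvF : v ∈ F
        · exact .atFinal hvF
        have hemem : s(v, u) ∈ remEdges Es T := mem_remEdges.2 ⟨heEs, ht'T⟩
        by_cases huF : u ∈ F
        · exact .stepWin hemem huF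
        have key : ∀ e'' ∈ remEdges Es T,
            TravWinsClassic F ((remEdges Es T).erase e'') u ∨
            TravWinsClassic F ((remEdges Es T).erase e'') v := by
          intro e'' he''
          have he''Es : e'' ∈ Es := (mem_remEdges.1 he'').1
          have hEB : hubEB Es hubZ (Sum.inr (Sum.inl e'')) := he''Es
          have hIH := ih (Sum.inr (Sum.inl e'')) (T ∪ {hubZ}) hEB
            Set.subset_union_left
            (Set.union_subset_union_right T (by intro x hx; simp at hx; simp [hx]))
            (by
              intro hmem
              rcases hmem with h | h
              · exact ht'T h
              · simp [hubZ] at h)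
          obtain ⟨w, hwmem, hwin⟩ := hIH.2 s(v, u) e'' rfl rfl he''Es
          rw [remEdges_erase] at hwin
          rcases Sym2.mem_iff.1 hwmem with rfl | rfl
          · exact Or.inr hwin
          · exact Or.inl hwin
        by_cases hex : ∃ e'' ∈ remEdges Es T,
            TravWinsClassic F ((remEdges Es T).erase e'') v
        · obtain ⟨e'', _, hw⟩ := hex
          exact classic_mono hw (Finset.erase_subset _ _)
        · refine .step hemem (fun e'' he'' => ?_)
          rcases key e'' he'' with hw | hw
          · exact hw
          · exact absurd ⟨e'', he'', hw⟩ hex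
      · -- traveler at a subdivision vertex, saboteur at a subdivision vertex
        intro e e' hte hbe he'Es
        subst hte; subst hbe
        rcases t' with w | e2 | u0
        swap
        · exact hET.elim
        swap
        · exact hET.elim
        obtain ⟨heEs, hwe⟩ := hET
        have hEB : hubEB Es (Sum.inr (Sum.inl e')) hubZ := he'Es
        have hIH := ih hubZ (T ∪ {Sum.inr (Sum.inl e'), hubZ}) hEB
          Set.subset_union_left (subset_refl _)
          (by
            intro hmem
            rcases hmem with h | h
            · exact ht'T h
            · simp [hubZ] at h)
        exact ⟨w, hwe, hIH.1 w rfl rfl⟩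

end Aux3

/-- The subdivision-plus-hub translation of a classic sabotage
game into a generalized sabotage game (unlimited budget, same final set)
preserves the winner. -/
theorem stmt_11 (V : Type) [DecidableEq V] (Es : Finset (Sym2 V)) (F : Set V) (ι : V) :
    TravWinsGen (hubET Es) (hubEB Es) (Sum.inl '' F)
      (Sum.inl ι) (Sum.inr (Sum.inr ())) ∅ ↔
    TravWinsClassic F Es ι := by
  constructor
  · intro h
    have := (toClassic h).1 ι rfl rfl
    rwa [remEdges_empty] at this
  · intro h
    exact toGen h (subset_refl Es) ∅ (by simp) (by simp)
end

section
/- In a finite Büchi game on an arena with V vertices and E edges, if a player has a winning strategy for the Büchi objective (visit F infinitely often), then she has a memoryless winning strategy. -/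
open Set

attribute [local instance] Classical.propDecidable

noncomputable section BuchiAux

variable {V : Type} [Fintype V] (V0 : Set V) (E : V → V → Prop)

/-- Controlled predecessor for player 0. -/
def bCPre (X : Set V) : Set V :=
  {v | (v ∈ V0 ∧ ∃ u, E v u ∧ u ∈ X) ∨ (v ∉ V0 ∧ ∀ u, E v u → u ∈ X)}

lemma bCPre_mono {X Y : Set V} (h : X ⊆ Y) : bCPre V0 E X ⊆ bCPre V0 E Y := by
  rintro v (⟨hv0, u, he, hu⟩ | ⟨hv0, hall⟩)
  · exact Or.inl ⟨hv0, u, he, h hu⟩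
  · exact Or.inr ⟨hv0, fun u he => h (hall u he)⟩

/-- Attractor approximants. -/
def attrN (S : Set V) : ℕ → Set V
  | 0 => S
  | n + 1 => attrN S n ∪ bCPre V0 E (attrN S n)

lemma attrN_mono_n (S : Set V) : Monotone (attrN V0 E S) :=
  monotone_nat_of_le_succ fun _ => subset_union_left

lemma attrN_mono_S {S T : Set V} (h : S ⊆ T) : ∀ n, attrN V0 E S n ⊆ attrN V0 E T n
  | 0 => h
  | n + 1 => union_subset_union (attrN_mono_S h n) (bCPre_mono V0 E (attrN_mono_S h n))

/-- Attractor. -/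
def bAttr (S : Set V) : Set V := ⋃ n, attrN V0 E S n

lemma attrN_subset_bAttr (S : Set V) (n : ℕ) : attrN V0 E S n ⊆ bAttr V0 E S :=
  subset_iUnion (attrN V0 E S) n

lemma subset_bAttr (S : Set V) : S ⊆ bAttr V0 E S := attrN_subset_bAttr V0 E S 0

lemma bAttr_mono {S T : Set V} (h : S ⊆ T) : bAttr V0 E S ⊆ bAttr V0 E T :=
  iUnion_mono fun n => attrN_mono_S V0 E h n

lemma bCPre_bAttr (S : Set V) : bCPre V0 E (bAttr V0 E S) ⊆ bAttr V0 E S := by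
  rintro v (⟨hv0, u, he, hu⟩ | ⟨hv0, hall⟩)
  · rcases mem_iUnion.1 hu with ⟨n, hn⟩
    exact attrN_subset_bAttr V0 E S (n + 1) (Or.inr (Or.inl ⟨hv0, u, he, hn⟩))
  · -- get a uniform stage for all successors
    have hex : ∀ u, E v u → ∃ n, u ∈ attrN V0 E S n := fun u he => mem_iUnion.1 (hall u he)
    classical
    set g : V → ℕ := fun u => if h : ∃ n, u ∈ attrN V0 E S n then Nat.find h else 0 with hg
    set N : ℕ := Finset.univ.sup g with hN
    have hall' : ∀ u, E v u → u ∈ attrN V0 E S N := by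
      intro u he
      have h := hex u he
      have h1 : u ∈ attrN V0 E S (g u) := by
        simp only [hg, dif_pos h]
        exact Nat.find_spec h
      exact attrN_mono_n V0 E S (Finset.le_sup (Finset.mem_univ u)) h1
    exact attrN_subset_bAttr V0 E S (N + 1) (Or.inr (Or.inr ⟨hv0, hall'⟩))

end BuchiAux

section Zpart
set_option linter.unusedSectionVars false

variable {V : Type} [Fintype V] (V0 : Set V) (E : V → V → Prop) (F : Set V)

/-- Büchi fixpoint iteration. -/
def Zseq : ℕ → Set V
  | 0 => univ
  | n + 1 => bAttr V0 E (F ∩ bCPre V0 E (Zseq n))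

lemma Zseq_succ_le : ∀ n, Zseq V0 E F (n + 1) ⊆ Zseq V0 E F n
  | 0 => subset_univ _
  | n + 1 =>
    bAttr_mono V0 E (inter_subset_inter_right F (bCPre_mono V0 E (Zseq_succ_le n)))

lemma Zseq_anti : Antitone (Zseq V0 E F) :=
  antitone_nat_of_succ_le (Zseq_succ_le V0 E F)

lemma Zseq_stab_exists : ∃ n, Zseq V0 E F (n + 1) = Zseq V0 E F n := by
  by_contra h
  push_neg at h
  have hcard : ∀ n, (Zseq V0 E F (n + 1)).ncard < (Zseq V0 E F n).ncard := by
    intro n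
    exact Set.ncard_lt_ncard (ssubset_of_subset_of_ne (Zseq_succ_le V0 E F n) (h n))
      (Set.toFinite _)
  have hle : ∀ n, (Zseq V0 E F n).ncard + n ≤ (Zseq V0 E F 0).ncard := by
    intro n
    induction n with
    | zero => simp
    | succ k ih => have := hcard k; omega
  have := hle ((Zseq V0 E F 0).ncard + 1)
  omega

/-- Index where the iteration stabilizes. -/
noncomputable def nstar : ℕ := Nat.find (Zseq_stab_exists V0 E F)

/-- The winning region. -/
def Wset : Set V := Zseq V0 E F (nstar V0 E F)

lemma Zseq_const : ∀ m, nstar V0 E F ≤ m → Zseq V0 E F m = Wset V0 E F := by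
  intro m hm
  induction m with
  | zero => simpa [Nat.le_zero.1 hm, Wset] using rfl
  | succ k ih =>
    rcases Nat.lt_or_ge (nstar V0 E F) (k + 1) with h | h
    · have hk : nstar V0 E F ≤ k := Nat.lt_succ_iff.1 h
      have hZk := ih hk
      have : Zseq V0 E F (k + 1) = Zseq V0 E F k := by
        rcases Nat.eq_or_lt_of_le hk with he | hlt
        · rw [← he]; exact Nat.find_spec (Zseq_stab_exists V0 E F)
        · -- from stabilization: once equal, always equal; prove by using hZk and prev
          -- easier: show Zseq (k+1) = bAttr (F ∩ bCPre (Zseq k)) with Zseq k = Wset = Zseq nstar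
          show bAttr V0 E (F ∩ bCPre V0 E (Zseq V0 E F k)) = Zseq V0 E F k
          rw [hZk]
          show bAttr V0 E (F ∩ bCPre V0 E (Zseq V0 E F (nstar V0 E F))) = Wset V0 E F
          exact Nat.find_spec (Zseq_stab_exists V0 E F)
      rw [this, hZk]
    · have : nstar V0 E F = k + 1 := le_antisymm hm h
      rw [← this]; rfl

lemma Wset_fix : Wset V0 E F = bAttr V0 E (F ∩ bCPre V0 E (Wset V0 E F)) :=
  (Zseq_const V0 E F _ (Nat.le_succ _)).symm

lemma notin_Wset_iff {v : V} : v ∉ Wset V0 E F ↔ ∃ k, v ∉ Zseq V0 E F k := by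
  constructor
  · intro h; exact ⟨nstar V0 E F, h⟩
  · rintro ⟨k, hk⟩ hW
    have : Zseq V0 E F (max k (nstar V0 E F)) = Wset V0 E F :=
      Zseq_const V0 E F _ (le_max_right _ _)
    have hmem : v ∈ Zseq V0 E F (max k (nstar V0 E F)) := this ▸ hW
    exact hk (Zseq_anti V0 E F (le_max_left k _) hmem)

end Zpart

section Sound
set_option linter.unusedSectionVars false

variable {V : Type} [Fintype V] (V0 : Set V) (E : V → V → Prop)

noncomputable def brank (T : Set V) (v : V) : ℕ :=
  if h : ∃ n, v ∈ attrN V0 E T n then Nat.find h else 0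

lemma brank_spec {T : Set V} {v : V} (h : v ∈ bAttr V0 E T) :
    v ∈ attrN V0 E T (brank V0 E T v) := by
  rcases mem_iUnion.1 h with ⟨n, hn⟩
  have hex : ∃ n, v ∈ attrN V0 E T n := ⟨n, hn⟩
  simp only [brank, dif_pos hex]
  exact Nat.find_spec hex

lemma brank_le {T : Set V} {v : V} {n : ℕ} (h : v ∈ attrN V0 E T n) :
    brank V0 E T v ≤ n := by
  have hex : ∃ m, v ∈ attrN V0 E T m := ⟨n, h⟩
  simp only [brank, dif_pos hex]
  exact Nat.find_le h

lemma brank_step {T : Set V} {v : V} (hA : v ∈ bAttr V0 E T) (hT : v ∉ T) :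
    brank V0 E T v ≠ 0 ∧ v ∈ bCPre V0 E (attrN V0 E T (brank V0 E T v - 1)) := by
  have hs := brank_spec V0 E hA
  have hne : brank V0 E T v ≠ 0 := by
    intro h0
    rw [h0] at hs
    exact hT hs
  obtain ⟨r, hr⟩ : ∃ r, brank V0 E T v = r + 1 :=
    ⟨brank V0 E T v - 1, (Nat.succ_pred_eq_of_ne_zero hne).symm⟩
  have hnot : v ∉ attrN V0 E T r := fun hmem => by
    have := brank_le V0 E hmem; omega
  rw [hr] at hs
  rcases hs with h | h
  · exact absurd h hnot
  · refine ⟨hne, ?_⟩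
    rw [hr]
    simpa using h

lemma sound_attr (T : Set V) (hT : T ⊆ bCPre V0 E (bAttr V0 E T))
    (htotal : ∀ v, ∃ u, E v u) :
    ∃ σ : V → V, (∀ v, E v (σ v)) ∧
      ∀ p : ℕ → V, p 0 ∈ bAttr V0 E T → (∀ i, E (p i) (p (i + 1))) →
        (∀ i, p i ∈ V0 → p (i + 1) = σ (p i)) →
        ∀ N, ∃ i, N ≤ i ∧ p i ∈ T := by
  classical
  have ex1 : ∀ v, v ∈ V0 → v ∈ T → ∃ u, E v u ∧ u ∈ bAttr V0 E T := by
    intro v h0 hTv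
    rcases hT hTv with ⟨_, u, he, hu⟩ | ⟨hn, _⟩
    · exact ⟨u, he, hu⟩
    · exact absurd h0 hn
  have ex2 : ∀ v, v ∈ V0 → v ∈ bAttr V0 E T → v ∉ T →
      ∃ u, E v u ∧ u ∈ attrN V0 E T (brank V0 E T v - 1) := by
    intro v h0 hA hTv
    rcases (brank_step V0 E hA hTv).2 with ⟨_, u, he, hu⟩ | ⟨hn, _⟩
    · exact ⟨u, he, hu⟩
    · exact absurd h0 hn
  refine ⟨fun v =>
    if h1 : v ∈ V0 ∧ v ∈ T then (ex1 v h1.1 h1.2).choose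
    else if h2 : v ∈ V0 ∧ v ∈ bAttr V0 E T ∧ v ∉ T then (ex2 v h2.1 h2.2.1 h2.2.2).choose
    else (htotal v).choose, ?_, ?_⟩
  · intro v
    by_cases h1 : v ∈ V0 ∧ v ∈ T
    · simp only [dif_pos h1]
      exact (ex1 v h1.1 h1.2).choose_spec.1
    · by_cases h2 : v ∈ V0 ∧ v ∈ bAttr V0 E T ∧ v ∉ T
      · simp only [dif_neg h1, dif_pos h2]
        exact (ex2 v h2.1 h2.2.1 h2.2.2).choose_spec.1
      · simp only [dif_neg h1, dif_neg h2]
        exact (htotal v).choose_spec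
  · intro p hp0 hedge hcons
    -- the play stays in the attractor, and whenever outside T the rank decreases
    have hmain : ∀ i, p i ∈ bAttr V0 E T ∧
        (p i ∉ T → p (i + 1) ∈ attrN V0 E T (brank V0 E T (p i) - 1)) := by
      intro i
      induction i with
      | zero =>
        refine ⟨hp0, ?_⟩
        intro hTv
        by_cases h0 : p 0 ∈ V0
        · have h2 : p 0 ∈ V0 ∧ p 0 ∈ bAttr V0 E T ∧ p 0 ∉ T := ⟨h0, hp0, hTv⟩
          rw [hcons 0 h0]
          simp only [dif_neg (fun h : p 0 ∈ V0 ∧ p 0 ∈ T => hTv h.2), dif_pos h2]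
          exact (ex2 _ h2.1 h2.2.1 h2.2.2).choose_spec.2
        · rcases (brank_step V0 E hp0 hTv).2 with ⟨h0', _⟩ | ⟨_, hall⟩
          · exact absurd h0' h0
          · exact hall _ (hedge 0)
      | succ k ih =>
        have hAk : p k ∈ bAttr V0 E T := ih.1
        have hAk1 : p (k + 1) ∈ bAttr V0 E T := by
          by_cases hTv : p k ∈ T
          · by_cases h0 : p k ∈ V0
            · have h1 : p k ∈ V0 ∧ p k ∈ T := ⟨h0, hTv⟩
              rw [hcons k h0]
              simp only [dif_pos h1]
              exact (ex1 _ h1.1 h1.2).choose_spec.2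
            · rcases hT hTv with ⟨h0', _⟩ | ⟨_, hall⟩
              · exact absurd h0' h0
              · exact hall _ (hedge k)
          · exact attrN_subset_bAttr V0 E T _ (ih.2 hTv)
        refine ⟨hAk1, ?_⟩
        intro hTv
        by_cases h0 : p (k + 1) ∈ V0
        · have h2 : p (k + 1) ∈ V0 ∧ p (k + 1) ∈ bAttr V0 E T ∧ p (k + 1) ∉ T :=
            ⟨h0, hAk1, hTv⟩
          rw [hcons (k + 1) h0]
          simp only [dif_neg (fun h : p (k + 1) ∈ V0 ∧ p (k + 1) ∈ T => hTv h.2), dif_pos h2]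
          exact (ex2 _ h2.1 h2.2.1 h2.2.2).choose_spec.2
        · rcases (brank_step V0 E hAk1 hTv).2 with ⟨h0', _⟩ | ⟨_, hall⟩
          · exact absurd h0' h0
          · exact hall _ (hedge (k + 1))
    -- rank decreases outside T, so T is reached from every position
    have key : ∀ r N, brank V0 E T (p N) ≤ r → ∃ i, N ≤ i ∧ p i ∈ T := by
      intro r
      induction r with
      | zero =>
        intro N hN
        have h0 : brank V0 E T (p N) = 0 := Nat.le_zero.1 hN
        have := brank_spec V0 E (hmain N).1
        rw [h0] at this
        exact ⟨N, le_rfl, this⟩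
      | succ r ih =>
        intro N hN
        by_cases hTv : p N ∈ T
        · exact ⟨N, le_rfl, hTv⟩
        · have hdec : p (N + 1) ∈ attrN V0 E T (brank V0 E T (p N) - 1) :=
            (hmain N).2 hTv
          have hlt : brank V0 E T (p (N + 1)) ≤ r := by
            have h1 := brank_le V0 E hdec
            have h2 : brank V0 E T (p N) ≠ 0 := (brank_step V0 E (hmain N).1 hTv).1
            omega
          obtain ⟨i, hi, hT'⟩ := ih (N + 1) hlt
          exact ⟨i, le_trans (Nat.le_succ N) hi, hT'⟩
    exact fun N => key (brank V0 E T (p N)) N le_rfl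

end Sound

section Complete
set_option linter.unusedSectionVars false

variable {V : Type} [Fintype V] (V0 : Set V) (E : V → V → Prop) (F : Set V)

noncomputable def mlev (v : V) : ℕ :=
  if h : ∃ k, v ∉ Zseq V0 E F k then Nat.find h else 0

lemma mlev_spec {v : V} (h : v ∉ Wset V0 E F) : v ∉ Zseq V0 E F (mlev V0 E F v) := by
  have hex := (notin_Wset_iff V0 E F).1 h
  simp only [mlev, dif_pos hex]
  exact Nat.find_spec hex

lemma mlev_le {v : V} {k : ℕ} (h : v ∉ Zseq V0 E F k) : mlev V0 E F v ≤ k := by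
  have hex : ∃ m, v ∉ Zseq V0 E F m := ⟨k, h⟩
  simp only [mlev, dif_pos hex]
  exact Nat.find_le h

lemma mlev_pos {v : V} (h : v ∉ Wset V0 E F) : 1 ≤ mlev V0 E F v := by
  rcases Nat.eq_zero_or_pos (mlev V0 E F v) with h0 | h0
  · have := mlev_spec V0 E F h
    rw [h0] at this
    exact absurd (mem_univ v) this
  · exact h0

lemma mlev_F (htotal : ∀ v, ∃ u, E v u) {v : V} (h : v ∉ Wset V0 E F) (hF : v ∈ F) :
    2 ≤ mlev V0 E F v := by
  have h1 : v ∈ Zseq V0 E F 1 := by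
    show v ∈ bAttr V0 E (F ∩ bCPre V0 E (Zseq V0 E F 0))
    apply subset_bAttr
    refine ⟨hF, ?_⟩
    by_cases h0 : v ∈ V0
    · obtain ⟨u, hu⟩ := htotal v
      exact Or.inl ⟨h0, u, hu, mem_univ u⟩
    · exact Or.inr ⟨h0, fun u _ => mem_univ u⟩
  have hne : mlev V0 E F v ≠ 1 := by
    intro heq
    exact (heq ▸ mlev_spec V0 E F h) h1
  have := mlev_pos V0 E F h
  omega

noncomputable def targetP (v : V) : ℕ :=
  if v ∈ F then mlev V0 E F v - 1 else mlev V0 E F v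

lemma keystep {v : V} (h : v ∉ Wset V0 E F) :
    (v ∈ V0 → ∀ u, E v u → u ∉ Zseq V0 E F (targetP V0 E F v)) ∧
    (v ∉ V0 → ∃ u, E v u ∧ u ∉ Zseq V0 E F (targetP V0 E F v)) := by
  obtain ⟨m', hm'⟩ : ∃ m', mlev V0 E F v = m' + 1 :=
    ⟨mlev V0 E F v - 1, (Nat.succ_pred_eq_of_ne_zero (by have := mlev_pos V0 E F h; omega)).symm⟩
  have hzm : Zseq V0 E F (m' + 1) = bAttr V0 E (F ∩ bCPre V0 E (Zseq V0 E F m')) := rfl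
  have hvnot : v ∉ Zseq V0 E F (m' + 1) := hm' ▸ mlev_spec V0 E F h
  have hnc : v ∉ bCPre V0 E (Zseq V0 E F (targetP V0 E F v)) := by
    by_cases hF : v ∈ F
    · have ht : targetP V0 E F v = m' := by simp [targetP, hF, hm']
      rw [ht]
      intro hmem
      exact hvnot (hzm ▸ subset_bAttr V0 E _ ⟨hF, hmem⟩)
    · have ht : targetP V0 E F v = m' + 1 := by simp [targetP, hF, hm']
      rw [ht]
      intro hmem
      rw [hzm] at hmem
      exact hvnot (hzm ▸ bCPre_bAttr V0 E _ hmem)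
  constructor
  · intro h0 u he hu
    exact hnc (Or.inl ⟨h0, u, he, hu⟩)
  · intro h0
    by_contra hall
    push_neg at hall
    exact hnc (Or.inr ⟨h0, fun u he => hall u he⟩)

noncomputable def tauP (htotal : ∀ v, ∃ u, E v u) (v : V) : V :=
  if h : ∃ u, E v u ∧ u ∉ Zseq V0 E F (targetP V0 E F v) then h.choose
  else (htotal v).choose

lemma tauP_edge (htotal : ∀ v, ∃ u, E v u) (v : V) : E v (tauP V0 E F htotal v) := by
  by_cases h : ∃ u, E v u ∧ u ∉ Zseq V0 E F (targetP V0 E F v)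
  · simp only [tauP, dif_pos h]
    exact h.choose_spec.1
  · simp only [tauP, dif_neg h]
    exact (htotal v).choose_spec

lemma tauP_spec (htotal : ∀ v, ∃ u, E v u) {v : V}
    (h : ∃ u, E v u ∧ u ∉ Zseq V0 E F (targetP V0 E F v)) :
    tauP V0 E F htotal v ∉ Zseq V0 E F (targetP V0 E F v) := by
  simp only [tauP, dif_pos h]
  exact h.choose_spec.2

/-- The spoiling run against a history strategy: (history so far, current vertex). -/
noncomputable def runP (htotal : ∀ v, ∃ u, E v u) (σ : List V → V) (v0 : V) :
    ℕ → List V × V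
  | 0 => ([], v0)
  | n + 1 =>
    let r := runP htotal σ v0 n
    (r.1 ++ [r.2], if r.2 ∈ V0 then σ (r.1 ++ [r.2]) else tauP V0 E F htotal r.2)

lemma runP_fst (htotal : ∀ v, ∃ u, E v u) (σ : List V → V) (v0 : V) :
    ∀ n, (runP V0 E F htotal σ v0 n).1
      = List.ofFn (fun j : Fin n => (runP V0 E F htotal σ v0 j).2) := by
  intro n
  induction n with
  | zero => simp [runP]
  | succ k ih =>
    show (runP V0 E F htotal σ v0 k).1 ++ [(runP V0 E F htotal σ v0 k).2] = _
    rw [ih, List.ofFn_succ']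
    simp [List.concat_eq_append]

end Complete

section Final
set_option linter.unusedSectionVars false

variable {V : Type} [Fintype V] (V0 : Set V) (E : V → V → Prop) (F : Set V)

lemma complete (htotal : ∀ v, ∃ u, E v u) {v0 : V} (hv0 : v0 ∉ Wset V0 E F)
    (σ : List V → V) (hσ : ∀ (l : List V) (v : V), E v (σ (l ++ [v]))) :
    ∃ p : ℕ → V, p 0 = v0 ∧ (∀ i, E (p i) (p (i + 1))) ∧
      (∀ i, p i ∈ V0 → p (i + 1) = σ (List.ofFn fun j : Fin (i + 1) => p j)) ∧
      ∃ N, ∀ i, N ≤ i → p i ∉ F := by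
  classical
  set p : ℕ → V := fun n => (runP V0 E F htotal σ v0 n).2 with hp
  have hsucc : ∀ i, p (i + 1) =
      (if p i ∈ V0 then σ ((runP V0 E F htotal σ v0 i).1 ++ [p i])
       else tauP V0 E F htotal (p i)) := fun i => rfl
  have hfst1 : ∀ i, (runP V0 E F htotal σ v0 i).1 ++ [p i]
      = List.ofFn (fun j : Fin (i + 1) => p j) := by
    intro i
    have := runP_fst V0 E F htotal σ v0 (i + 1)
    exact this
  have hedge : ∀ i, E (p i) (p (i + 1)) := by
    intro i
    rw [hsucc i]
    by_cases h0 : p i ∈ V0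
    · rw [if_pos h0]; exact hσ _ _
    · rw [if_neg h0]; exact tauP_edge V0 E F htotal (p i)
  have hcons : ∀ i, p i ∈ V0 →
      p (i + 1) = σ (List.ofFn fun j : Fin (i + 1) => p j) := by
    intro i h0
    rw [hsucc i, if_pos h0, hfst1 i]
  -- the play stays outside the winning region and drops below the target level
  have hmain : ∀ i, p i ∉ Wset V0 E F ∧ p (i + 1) ∉ Zseq V0 E F (targetP V0 E F (p i)) := by
    have step : ∀ i, p i ∉ Wset V0 E F → p (i + 1) ∉ Zseq V0 E F (targetP V0 E F (p i)) := by
      intro i hW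
      rw [hsucc i]
      by_cases h0 : p i ∈ V0
      · rw [if_pos h0]
        exact (keystep V0 E F hW).1 h0 _ (by have := hσ ((runP V0 E F htotal σ v0 i).1) (p i); exact this)
      · rw [if_neg h0]
        exact tauP_spec V0 E F htotal ((keystep V0 E F hW).2 h0)
    intro i
    induction i with
    | zero => exact ⟨hv0, step 0 hv0⟩
    | succ k ih =>
      have hW : p (k + 1) ∉ Wset V0 E F :=
        (notin_Wset_iff V0 E F).2 ⟨targetP V0 E F (p k), ih.2⟩
      exact ⟨hW, step (k + 1) hW⟩
  -- the level is nonincreasing and drops strictly at every F-visit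
  have hlev : ∀ i, mlev V0 E F (p (i + 1)) ≤ targetP V0 E F (p i) :=
    fun i => mlev_le V0 E F (hmain i).2
  have hanti : ∀ i j, i ≤ j → mlev V0 E F (p j) ≤ mlev V0 E F (p i) := by
    have h1 : ∀ i, mlev V0 E F (p (i + 1)) ≤ mlev V0 E F (p i) := by
      intro i
      have := hlev i
      by_cases hF : p i ∈ F
      · simp only [targetP, if_pos hF] at this; omega
      · simpa only [targetP, if_neg hF] using this
    intro i j hij
    induction j with
    | zero =>
      have h0 : i = 0 := Nat.le_zero.1 hij
      rw [h0]
    | succ k ihk =>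
      rcases Nat.lt_or_ge i (k + 1) with h | h
      · exact le_trans (h1 k) (ihk (Nat.lt_succ_iff.1 h))
      · have : i = k + 1 := le_antisymm hij h
        rw [this]
    -- done
  set g : ℕ → ℕ := fun i => mlev V0 E F (p i) with hg
  have hne : (Set.range g).Nonempty := ⟨g 0, 0, rfl⟩
  obtain ⟨N, hN⟩ := Nat.sInf_mem hne
  refine ⟨p, rfl, hedge, hcons, N, ?_⟩
  intro i hi hF
  have hconst : g i = g N := by
    have h1 : g i ≤ g N := hanti N i hi
    have h2 : sInf (Set.range g) ≤ g i := Nat.sInf_le ⟨i, rfl⟩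
    omega
  have hdrop : g (i + 1) < g i := by
    have := hlev i
    have h2 : 2 ≤ mlev V0 E F (p i) := mlev_F V0 E F htotal (hmain i).1 hF
    simp only [targetP, if_pos hF] at this
    simp only [hg]
    omega
  have h3 : sInf (Set.range g) ≤ g (i + 1) := Nat.sInf_le ⟨i + 1, rfl⟩
  omega

end Final

/-- In a finite Büchi game, if a player has a (history-dependent)
winning strategy for the Büchi objective (visit F infinitely often), then she
has a memoryless winning strategy. -/
theorem stmt_14 (V : Type) [Fintype V] (V0 : Set V) (E : V → V → Prop) (F : Set V)
    (htotal : ∀ v, ∃ u, E v u) (v0 : V)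
    (hwin : ∃ σ : List V → V, (∀ (l : List V) (v : V), E v (σ (l ++ [v]))) ∧
      ∀ p : ℕ → V, p 0 = v0 → (∀ i, E (p i) (p (i + 1))) →
        (∀ i, p i ∈ V0 → p (i + 1) = σ (List.ofFn fun j : Fin (i + 1) => p j)) →
        ∀ N, ∃ i, N ≤ i ∧ p i ∈ F) :
    ∃ σ : V → V, (∀ v, E v (σ v)) ∧
      ∀ p : ℕ → V, p 0 = v0 → (∀ i, E (p i) (p (i + 1))) →
        (∀ i, p i ∈ V0 → p (i + 1) = σ (p i)) →
        ∀ N, ∃ i, N ≤ i ∧ p i ∈ F := by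
  classical
  have hv0W : v0 ∈ Wset V0 E F := by
    by_contra hv0
    obtain ⟨σh, hσe, hσw⟩ := hwin
    obtain ⟨p, h0, he, hc, N, hN⟩ := complete V0 E F htotal hv0 σh hσe
    obtain ⟨i, hi, hF⟩ := hσw p h0 he hc N
    exact hN i hi hF
  have hTsub : F ∩ bCPre V0 E (Wset V0 E F)
      ⊆ bCPre V0 E (bAttr V0 E (F ∩ bCPre V0 E (Wset V0 E F))) := by
    intro v hv
    have := hv.2
    rwa [Wset_fix V0 E F] at this
  obtain ⟨σ, hσe, hσw⟩ := sound_attr V0 E (F ∩ bCPre V0 E (Wset V0 E F)) hTsub htotal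
  refine ⟨σ, hσe, ?_⟩
  intro p h0 he hc N
  have hp0 : p 0 ∈ bAttr V0 E (F ∩ bCPre V0 E (Wset V0 E F)) := by
    rw [h0, ← Wset_fix V0 E F]
    exact hv0W
  obtain ⟨i, hi, hT⟩ := hσw p hp0 he hc N
  exact ⟨i, hi, hT.1⟩
end
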